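/- Let n ≥ 3 be an odd integer and k = ⌊n/2⌋ = (n−1)/2, and define the auxiliary polynomial φ(t) = ∑_{j=k+1}^{n} B_{n,j}(t). Then φ satisfies all the conditions of an auxiliary function: φ(0) = 0, φ(1) = 1, φ(t) + φ(1−t) = 1 for all t ∈ ℝ, and φ'(0) = φ'(1) = 0. -/

import Mathlib

theorem stmt_14 (n : ℕ) (hn : 3 ≤ n) (hodd : Odd n) (k : ℕ) (hk : k = n / 2)
    (φ : ℝ → ℝ)
    (hφ : φ = fun t : ℝ => ∑ j ∈ Finset.Icc (k + 1) n,
      (n.choose j : ℝ) * t ^ j * (1 - t) ^ (n - j)) :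
    φ 0 = 0 ∧ φ 1 = 1 ∧ (∀ t : ℝ, φ t + φ (1 - t) = 1) ∧
      deriv φ 0 = 0 ∧ deriv φ 1 = 0 := by
  obtain ⟨m, hm⟩ := hodd
  have hkm : k = m := by omega
  subst hkm
  have hn2 : n = 2 * k + 1 := hm
  have hk1 : 1 ≤ k := by omega
  -- symmetry
  have hsym : ∀ t : ℝ, φ t + φ (1 - t) = 1 := by
    intro t
    rw [hφ]
    simp only
    have hre : ∑ j ∈ Finset.Icc (k + 1) n,
        (n.choose j : ℝ) * (1 - t) ^ j * (1 - (1 - t)) ^ (n - j)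
        = ∑ i ∈ Finset.Icc 0 k,
        (n.choose i : ℝ) * t ^ i * (1 - t) ^ (n - i) := by
      apply Finset.sum_nbij' (i := fun j => n - j) (j := fun i => n - i)
      · intro j hj
        simp only [Finset.mem_Icc] at *
        omega
      · intro i hi
        simp only [Finset.mem_Icc] at *
        omega
      · intro j hj
        simp only [Finset.mem_Icc] at hj
        omega
      · intro i hi
        simp only [Finset.mem_Icc] at hi
        omega
      · intro j hj
        simp only [Finset.mem_Icc] at hj
        rw [Nat.choose_symm (by omega)]
        have : n - (n - j) = j := by omega
        rw [this]
        ring_nf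
    rw [hre]
    have hIcc : Finset.Icc (k+1) n = Finset.Ico (k+1) (n+1) := by
      rw [Finset.Ico_add_one_right_eq_Icc]
    have hIcc0 : Finset.Icc 0 k = Finset.Ico 0 (k+1) := by
      rw [Finset.Ico_add_one_right_eq_Icc]
    rw [hIcc, hIcc0, add_comm, Finset.sum_Ico_consecutive _ (by omega) (by omega)]
    have hap := add_pow t (1 - t) n
    simp only [add_sub_cancel, one_pow] at hap
    rw [← Nat.Ico_zero_eq_range] at hap
    calc ∑ i ∈ Finset.Ico 0 (n+1), (n.choose i : ℝ) * t ^ i * (1 - t) ^ (n - i)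
        = ∑ i ∈ Finset.Ico 0 (n+1), t ^ i * (1 - t) ^ (n - i) * (n.choose i : ℝ) := by
          apply Finset.sum_congr rfl; intro j _; ring
      _ = 1 := hap.symm
  -- derivative at a point: each summand
  have hderiv : ∀ x : ℝ, HasDerivAt φ
      (∑ j ∈ Finset.Icc (k + 1) n,
        (n.choose j : ℝ) * ((j : ℝ) * x ^ (j - 1) * (1 - x) ^ (n - j)
          + x ^ j * ((n - j : ℕ) * (1 - x) ^ (n - j - 1) * (-1)))) x := by
    intro x
    rw [hφ]
    apply HasDerivAt.fun_sum
    intro j _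
    have h1 : HasDerivAt (fun t : ℝ => t ^ j) ((j : ℝ) * x ^ (j - 1)) x :=
      hasDerivAt_pow j x
    have h2 : HasDerivAt (fun t : ℝ => (1 - t) ^ (n - j))
        (((n - j : ℕ) : ℝ) * (1 - x) ^ (n - j - 1) * (-1)) x := by
      have := ((hasDerivAt_id x).const_sub 1).fun_pow (n - j)
      simpa using this
    have := (h1.fun_mul h2).const_mul ((n.choose j : ℝ))
    convert this using 1
    case e'_4 => rfl
    funext t; ring
  have hd0 : HasDerivAt φ 0 0 := by
    have := hderiv 0
    have hz : (∑ j ∈ Finset.Icc (k + 1) n,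
        (n.choose j : ℝ) * ((j : ℝ) * (0:ℝ) ^ (j - 1) * (1 - 0) ^ (n - j)
          + (0:ℝ) ^ j * ((n - j : ℕ) * (1 - (0:ℝ)) ^ (n - j - 1) * (-1)))) = 0 := by
      apply Finset.sum_eq_zero
      intro j hj
      simp only [Finset.mem_Icc] at hj
      rw [zero_pow (by omega : j - 1 ≠ 0), zero_pow (by omega : j ≠ 0)]
      ring
    rwa [hz] at this
  have hdφ0 : deriv φ 0 = 0 := hd0.deriv
  refine ⟨?_, ?_, hsym, hdφ0, ?_⟩
  · rw [hφ]
    apply Finset.sum_eq_zero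
    intro j hj
    simp only [Finset.mem_Icc] at hj
    rw [zero_pow (by omega : j ≠ 0)]
    ring
  · rw [hφ]
    simp only
    rw [Finset.sum_eq_single n]
    · simp
    · intro j hj hne
      simp only [Finset.mem_Icc] at hj
      rw [show (1:ℝ) - 1 = 0 by ring, zero_pow (by omega : n - j ≠ 0)]
      ring
    · intro h
      exact absurd (Finset.mem_Icc.mpr ⟨by omega, le_refl n⟩) h
  · -- deriv φ 1 = 0 via symmetry
    have hψ : φ = fun t : ℝ => 1 - φ (1 - t) := by
      funext t
      have := hsym t
      linarith
    have h1 : HasDerivAt φ 0 1 := by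
      rw [hψ]
      have hg : HasDerivAt φ 0 ((fun t : ℝ => 1 - t) 1) := by simpa using hd0
      have hf : HasDerivAt (fun t : ℝ => 1 - t) (-1) 1 := by
        simpa using (hasDerivAt_id (1:ℝ)).const_sub 1
      have hcomp : HasDerivAt (fun t : ℝ => φ (1 - t)) (0 * (-1)) 1 := by
        have := HasDerivAt.comp (1:ℝ) hg hf
        exact this
      have := hcomp.const_sub 1
      simpa using this
    exact h1.deriv
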